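/- Let k ≥ 2, 1 ≤ ℓ ≤ k, and let ρ be a non-empty h-ary relation on **k**. Then ρ is hereditarily ℓ-rigid if and only if pPol^{(1)}(ρ) ∩ Ψ_ℓ(k) = ∅ and Ω_{<ℓ}(k) ⊆ pPol^{(1)}(ρ). -/

import Mathlib

/-- A unary partial function on `Fin k`: a domain together with a value map
(values outside the domain are irrelevant). -/
structure PFun1 (k : ℕ) where
  Dom : Set (Fin k)
  toFun : Fin k → Fin k

/-- A unary partial function `f` preserves the `h`-ary relation `ρ` if whenever a
tuple of `ρ` has all its entries in the domain of `f`, the image tuple is in `ρ`. -/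
def Preserves1 {k h : ℕ} (f : PFun1 k) (ρ : Set (Fin h → Fin k)) : Prop :=
  ∀ M : Fin h → Fin k, M ∈ ρ → (∀ i, M i ∈ f.Dom) → (fun i => f.toFun (M i)) ∈ ρ

/-- `pPol^{(1)}(ρ)`: the set of unary partial functions preserving `ρ`. -/
def pPol1 {k : ℕ} (h : ℕ) (ρ : Set (Fin h → Fin k)) : Set (PFun1 k) :=
  { f | Preserves1 f ρ }

/-- `Ω_{<ℓ}(k)`: unary partial functions that are restrictions of the identity
or whose image has fewer than `ℓ` elements. -/
def Omega (k ℓ : ℕ) : Set (PFun1 k) :=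
  { f | (∀ x ∈ f.Dom, f.toFun x = x) ∨ (f.toFun '' f.Dom).ncard < ℓ }

/-- `Ψ_ℓ(k)`: unary partial functions with domain of size `ℓ` not in `Ω_{<ℓ}(k)`. -/
def Psi (k ℓ : ℕ) : Set (PFun1 k) :=
  { f | f.Dom.ncard = ℓ ∧ f ∉ Omega k ℓ }

/-- `g` is a subfunction of `f`. -/
def Sub1 {k : ℕ} (g f : PFun1 k) : Prop :=
  g.Dom ⊆ f.Dom ∧ ∀ x ∈ g.Dom, g.toFun x = f.toFun x

/-- `ρ` is hereditarily `ℓ`-rigid: `pPol^{(1)}(ρ) = Ω_{<ℓ}(k)`. -/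
def HereditarilyRigid {k : ℕ} (h : ℕ) (ℓ : ℕ) (ρ : Set (Fin h → Fin k)) : Prop :=
  pPol1 h ρ = Omega k ℓ

/-- `T_ρ^ℓ(x)`: the set of surjective `i : [h] → [ℓ]` with `x ∘ i ∈ ρ`. -/
def Tset {k h : ℕ} (ℓ : ℕ) (ρ : Set (Fin h → Fin k)) (x : Fin ℓ → Fin k) :
    Set (Fin h → Fin ℓ) :=
  { i | Function.Surjective i ∧ x ∘ i ∈ ρ }

/-- `s(h, ℓ)`: the number of surjections from an `h`-element set onto an `ℓ`-element set. -/
noncomputable def numSurj (h ℓ : ℕ) : ℕ := Nat.card { i : Fin h → Fin ℓ // Function.Surjective i }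

/-- `ρ` is hereditarily `ℓ`-rigid iff `pPol^{(1)}(ρ) ∩ Ψ_ℓ(k) = ∅` and
`Ω_{<ℓ}(k) ⊆ pPol^{(1)}(ρ)`. -/
theorem hereditarilyRigid_iff (k h ℓ : ℕ) (hk : 2 ≤ k) (hℓ1 : 1 ≤ ℓ) (hℓk : ℓ ≤ k)
    (ρ : Set (Fin h → Fin k)) (hρ : ρ.Nonempty) :
    HereditarilyRigid h ℓ ρ ↔ pPol1 h ρ ∩ Psi k ℓ = ∅ ∧ Omega k ℓ ⊆ pPol1 h ρ := by
  constructor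
  · intro H
    rw [HereditarilyRigid] at H
    constructor
    · ext f
      simp only [Set.mem_inter_iff, Set.mem_empty_iff_false, iff_false, not_and]
      intro hf hPsi
      exact hPsi.2 (H ▸ hf)
    · exact H.symm.subset
  · rintro ⟨hempty, hsub⟩
    apply Set.Subset.antisymm _ hsub
    intro f hf
    by_contra hfO
    -- f is not a restriction of identity, and its image has ncard ≥ ℓ
    have hnid : ¬ ∀ x ∈ f.Dom, f.toFun x = x := fun h' => hfO (Or.inl h')
    have himg : ℓ ≤ (f.toFun '' f.Dom).ncard := by
      by_contra h'
      exact hfO (Or.inr (Nat.lt_of_not_le h'))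
    push_neg at hnid
    obtain ⟨a, haD, hfa⟩ := hnid
    -- get S ⊆ image with ncard ℓ, then D ⊆ Dom with BijOn f D S
    obtain ⟨S, hS, hScard⟩ := Set.exists_subset_card_eq himg
    have hsurj : Set.SurjOn f.toFun f.Dom S := fun y hy => hS hy
    obtain ⟨D, hDsub, hbij⟩ := hsurj.exists_bijOn_subset
    have hDinj : Set.InjOn f.toFun D := hbij.injOn
    have hDcard : D.ncard = ℓ := by
      rw [← hScard, ← hbij.image_eq]
      exact (Set.ncard_image_of_injOn hDinj).symm
    -- Main construction: a set D' ⊆ Dom with ncard ℓ, InjOn, and not identity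
    have key : ∃ D' : Set (Fin k), D' ⊆ f.Dom ∧ D'.ncard = ℓ ∧ Set.InjOn f.toFun D' ∧
        ¬ ∀ x ∈ D', f.toFun x = x := by
      by_cases hid : ∀ x ∈ D, f.toFun x = x
      · -- f is identity on D; swap in a
        have haD' : a ∉ D := fun hin => hfa (hid a hin)
        have hDne : D.Nonempty := by
          rw [← Set.ncard_pos (Set.toFinite D), hDcard]; exact hℓ1
        obtain ⟨d1, hd1⟩ := hDne
        obtain ⟨d0, hd0D, hkey⟩ : ∃ d0 ∈ D, ∀ d ∈ D \ {d0}, d ≠ f.toFun a := by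
          by_cases hc : f.toFun a ∈ D
          · exact ⟨f.toFun a, hc, fun d hd heq => hd.2 (by simp [heq])⟩
          · exact ⟨d1, hd1, fun d hd heq => hc (heq ▸ hd.1)⟩
        refine ⟨insert a (D \ {d0}), ?_, ?_, ?_, ?_⟩
        · intro x hx
          rcases hx with rfl | hx
          · exact haD
          · exact hDsub hx.1
        · rw [Set.ncard_insert_of_notMem (fun hx => haD' hx.1) (Set.toFinite _),
            Set.ncard_diff_singleton_of_mem hd0D, hDcard]
          omega
        · intro x hx y hy hxy
          rcases hx with rfl | hx <;> rcases hy with rfl | hy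
          · rfl
          · exact absurd hxy.symm (by rw [hid y hy.1]; exact (hkey y hy))
          · exact absurd hxy (by rw [hid x hx.1]; exact (hkey x hx))
          · rw [hid x hx.1, hid y hy.1] at hxy; exact hxy
        · intro hall
          exact hfa (hall a (Set.mem_insert _ _))
      · push_neg at hid
        exact ⟨D, hDsub, hDcard, hDinj, by push_neg; exact hid⟩
    obtain ⟨D', hD'sub, hD'card, hD'inj, hD'nid⟩ := key
    -- the subfunction g = ⟨D', f.toFun⟩ is in pPol1 ∩ Psi, contradiction
    set g : PFun1 k := ⟨D', f.toFun⟩ with hg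
    have hgPol : g ∈ pPol1 h ρ := by
      intro M hM hMd
      exact hf M hM (fun i => hD'sub (hMd i))
    have hgPsi : g ∈ Psi k ℓ := by
      refine ⟨hD'card, ?_⟩
      rintro (hid' | hlt)
      · exact hD'nid hid'
      · rw [hg] at hlt
        simp only at hlt
        rw [Set.ncard_image_of_injOn hD'inj, hD'card] at hlt
        exact lt_irrefl _ hlt
    have : g ∈ pPol1 h ρ ∩ Psi k ℓ := ⟨hgPol, hgPsi⟩
    rw [hempty] at this
    exact this
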